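/- Let G be a chordal graph with edge {x,y}, let G~ be the graph on V(G)\{x,y} with edges E(G\{x,y}) ∪ {{u,v} : u ∈ N_G(x)\{y}, v ∈ N_G(y)\{x}, u ≠ v}, and let M be an induced matching of G~. Then at least one of the following holds: (i) V(M) ∩ N_G(x) = ∅; (ii) V(M) ∩ N_G(y) = ∅; (iii) exactly one edge e ∈ M satisfies e ∩ (N_G(x) ∪ N_G(y)) ≠ ∅. -/
import Mathlib


open scoped Classical

variable {V : Type*} [DecidableEq V]

/-- A matching of a hypergraph with edge set `E`: a set of pairwise disjoint edges. -/
def IsMatching (E M : Finset (Finset V)) : Prop :=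
  M ⊆ E ∧ ∀ e ∈ M, ∀ f ∈ M, e ≠ f → Disjoint e f

/-- The set of vertices covered by a set of edges. -/
def verts (M : Finset (Finset V)) : Finset V := M.sup id

/-- Edge set of the induced sub-hypergraph on the vertex set `W`. -/
def inducedSub (E : Finset (Finset V)) (W : Finset V) : Finset (Finset V) :=
  E.filter (fun e => e ⊆ W)

/-- The matching number. -/
noncomputable def matchNum (E : Finset (Finset V)) : ℕ :=
  sSup {n : ℕ | ∃ M : Finset (Finset V), IsMatching E M ∧ M.card = n}

/-- `P` is a partition of the finite set `M` into nonempty pairwise disjoint parts. -/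
def IsPartitionOf (M : Finset (Finset V)) (P : Finset (Finset (Finset V))) : Prop :=
  (∀ p ∈ P, p ≠ ∅) ∧ (∀ p ∈ P, ∀ q ∈ P, p ≠ q → Disjoint p q) ∧ P.sup id = M

/-- A partition witnessing that `M` is a generalized `k`-admissible matching. -/
def GenAdmPartition (E M : Finset (Finset V)) (k : ℕ)
    (P : Finset (Finset (Finset V))) : Prop :=
  IsPartitionOf M P ∧
  (∀ e ∈ inducedSub E (verts M), ∃ p ∈ P, e ⊆ verts p) ∧
  k ≤ M.card ∧ M.card ≤ P.card + k - 1 ∧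
  ∀ p ∈ P, ∀ M' : Finset (Finset V),
    IsMatching (inducedSub E (verts p)) M' → M'.card = p.card → verts M' = verts p

/-- Generalized `k`-admissible matching. -/
def IsGenAdmissible (E M : Finset (Finset V)) (k : ℕ) : Prop :=
  IsMatching E M ∧ ∃ P, GenAdmPartition E M k P

/-- A partition witnessing that `M` is a `k`-admissible matching (d-uniform setting). -/
def AdmPartition (E M : Finset (Finset V)) (k : ℕ)
    (P : Finset (Finset (Finset V))) : Prop :=
  IsPartitionOf M P ∧
  (∀ e ∈ inducedSub E (verts M), ∃ p ∈ P, e ⊆ verts p) ∧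
  M.card ≤ P.card + k - 1

/-- `k`-admissible matching. -/
def IsAdmissible (E M : Finset (Finset V)) (k : ℕ) : Prop :=
  IsMatching E M ∧ ∃ P, AdmPartition E M k P

/-- The `k`-admissible matching number `aim(H, k)`. -/
noncomputable def aim (E : Finset (Finset V)) (k : ℕ) : ℕ :=
  sSup {n : ℕ | ∃ M : Finset (Finset V), IsAdmissible E M k ∧ M.card = n}

/-- The edges of a simple graph, as a set of `2`-element vertex subsets. -/
noncomputable def graphEdges [Fintype V] (G : SimpleGraph V) : Finset (Finset V) :=
  Finset.univ.filter (fun s : Finset V =>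
    s.card = 2 ∧ ∀ a ∈ s, ∀ b ∈ s, a ≠ b → G.Adj a b)

/-- The `k`-admissible matching number of a graph. -/
noncomputable def aimG [Fintype V] (G : SimpleGraph V) (k : ℕ) : ℕ :=
  aim (graphEdges G) k

/-- The Erey–Hibi `k`-admissible matchings: additionally each part must induce a forest. -/
def IsAdmissibleStar [Fintype V] (G : SimpleGraph V) (M : Finset (Finset V)) (k : ℕ) : Prop :=
  IsMatching (graphEdges G) M ∧ ∃ P : Finset (Finset (Finset V)),
    AdmPartition (graphEdges G) M k P ∧
    ∀ p ∈ P, (SimpleGraph.induce (↑(verts p) : Set V) G).IsAcyclic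

/-- The Erey–Hibi `k`-admissible matching number `aim*(G,k)`. -/
noncomputable def aimStar [Fintype V] (G : SimpleGraph V) (k : ℕ) : ℕ :=
  sSup {n : ℕ | ∃ M : Finset (Finset V), IsAdmissibleStar G M k ∧ M.card = n}

/-- The graph `G~` associated to the edge `{x,y}` of `G`: edges of `G \ {x,y}` together
with all pairs `{u,v}`, `u ∈ N_G(x) \ {y}`, `v ∈ N_G(y) \ {x}`, `u ≠ v`. -/
def tildeGraph (G : SimpleGraph V) (x y : V) : SimpleGraph V :=
  SimpleGraph.fromRel (fun u v =>
    u ≠ x ∧ u ≠ y ∧ v ≠ x ∧ v ≠ y ∧ (G.Adj u v ∨ (G.Adj x u ∧ G.Adj y v)))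

/-- A graph is chordal if it has no induced cycle of length at least `4`. -/
def Chordal {W : Type*} (G : SimpleGraph W) : Prop :=
  ∀ n : ℕ, 4 ≤ n → ¬ ∃ f : Fin n → W, Function.Injective f ∧
    ∀ i j : Fin n, G.Adj (f i) (f j) ↔
      ((j : ℕ) = ((i : ℕ) + 1) % n ∨ (i : ℕ) = ((j : ℕ) + 1) % n)

/-- Every vertex of an edge of the tilde graph is different from `x` and `y`. -/
lemma mem_tilde_edge_ne [Fintype V] (G : SimpleGraph V) (x y : V)
    {e : Finset V} (he : e ∈ graphEdges (tildeGraph G x y)) {v : V} (hv : v ∈ e) :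
    v ≠ x ∧ v ≠ y := by
  rw [graphEdges, Finset.mem_filter] at he
  obtain ⟨_, hcard, hadj⟩ := he
  obtain ⟨a, b, hab, rfl⟩ := Finset.card_eq_two.mp hcard
  have hAdj : (tildeGraph G x y).Adj a b :=
    hadj a (by simp) b (by simp) hab
  rw [tildeGraph, SimpleGraph.fromRel_adj] at hAdj
  rcases hAdj.2 with ⟨h1, h2, h3, h4, _⟩ | ⟨h1, h2, h3, h4, _⟩ <;>
    rcases Finset.mem_insert.mp hv with rfl | hv <;>
    simp_all

/-- Key lemma: two distinct edges of an induced matching of the tilde graph cannot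
contain a neighbor of `x` and a neighbor of `y` respectively. -/
lemma key_tilde [Fintype V] (G : SimpleGraph V) (x y : V)
    (M : Finset (Finset V))
    (hM : IsMatching (graphEdges (tildeGraph G x y)) M)
    (hind : inducedSub (graphEdges (tildeGraph G x y)) (verts M) = M)
    {e f : Finset V} (he : e ∈ M) (hf : f ∈ M) (hef : e ≠ f)
    {u w : V} (hu : u ∈ e) (hw : w ∈ f) (hxu : G.Adj x u) (hyw : G.Adj y w) :
    False := by
  obtain ⟨hME, hdisj⟩ := hM
  have hwe : w ∉ e := fun h => (Finset.disjoint_left.mp (hdisj e he f hf hef) h) hw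
  have huw : u ≠ w := fun h => hwe (h ▸ hu)
  obtain ⟨hux, huy⟩ := mem_tilde_edge_ne G x y (hME he) hu
  obtain ⟨hwx, hwy⟩ := mem_tilde_edge_ne G x y (hME hf) hw
  have hAdj : (tildeGraph G x y).Adj u w := by
    rw [tildeGraph, SimpleGraph.fromRel_adj]
    exact ⟨huw, Or.inl ⟨hux, huy, hwx, hwy, Or.inr ⟨hxu, hyw⟩⟩⟩
  have hEdge : ({u, w} : Finset V) ∈ graphEdges (tildeGraph G x y) := by
    rw [graphEdges, Finset.mem_filter]
    refine ⟨Finset.mem_univ _, Finset.card_pair huw, fun a ha b hb hab => ?_⟩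
    rcases Finset.mem_insert.mp ha with rfl | ha <;>
      rcases Finset.mem_insert.mp hb with rfl | hb <;>
      simp_all [SimpleGraph.adj_comm]
  have hsub : ({u, w} : Finset V) ⊆ verts M := by
    intro a ha
    rcases Finset.mem_insert.mp ha with rfl | ha
    · exact Finset.mem_sup.mpr ⟨e, he, hu⟩
    · rw [Finset.mem_singleton] at ha
      exact ha ▸ Finset.mem_sup.mpr ⟨f, hf, hw⟩
  have hmem : ({u, w} : Finset V) ∈ M := by
    rw [← hind, inducedSub, Finset.mem_filter]; exact ⟨hEdge, hsub⟩
  have hne : e ≠ ({u, w} : Finset V) := by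
    intro h; exact hwe (h ▸ (by simp : w ∈ ({u, w} : Finset V)))
  exact (Finset.disjoint_left.mp (hdisj e he _ hmem hne) hu) (by simp)

/-- For `G` chordal with edge `{x,y}` and `M` an induced matching of `G~`, either
`V(M) ∩ N_G(x) = ∅`, or `V(M) ∩ N_G(y) = ∅`, or exactly one edge of `M` meets
`N_G(x) ∪ N_G(y)`. -/
theorem inducedMatching_tildeGraph [Fintype V] (G : SimpleGraph V) (x y : V)
    (hchordal : Chordal G) (hxy : G.Adj x y)
    (M : Finset (Finset V))
    (hM : IsMatching (graphEdges (tildeGraph G x y)) M)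
    (hind : inducedSub (graphEdges (tildeGraph G x y)) (verts M) = M) :
    ((↑(verts M) : Set V) ∩ G.neighborSet x = ∅) ∨
    ((↑(verts M) : Set V) ∩ G.neighborSet y = ∅) ∨
    (∃! e : Finset V, e ∈ M ∧
      ((↑e : Set V) ∩ (G.neighborSet x ∪ G.neighborSet y)).Nonempty) := by
  by_cases hx : ((↑(verts M) : Set V) ∩ G.neighborSet x = ∅)
  · exact Or.inl hx
  by_cases hy : ((↑(verts M) : Set V) ∩ G.neighborSet y = ∅)
  · exact Or.inr (Or.inl hy)
  refine Or.inr (Or.inr ?_)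
  obtain ⟨p, hpM, hpx⟩ : ∃ p, p ∈ verts M ∧ G.Adj x p := by
    obtain ⟨p, hp1, hp2⟩ := Set.nonempty_iff_ne_empty.mpr hx
    exact ⟨p, by exact_mod_cast hp1, hp2⟩
  obtain ⟨q, hqM, hqy⟩ : ∃ q, q ∈ verts M ∧ G.Adj y q := by
    obtain ⟨q, hq1, hq2⟩ := Set.nonempty_iff_ne_empty.mpr hy
    exact ⟨q, by exact_mod_cast hq1, hq2⟩
  obtain ⟨ep, hepM, hpe⟩ := Finset.mem_sup.mp hpM
  obtain ⟨eq', heqM, hqe⟩ := Finset.mem_sup.mp hqM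
  have heq : ep = eq' := by
    by_contra h
    exact key_tilde G x y M hM hind hepM heqM h hpe hqe hpx hqy
  subst heq
  refine ⟨ep, ⟨hepM, ⟨p, hpe, Or.inl hpx⟩⟩, ?_⟩
  rintro f ⟨hfM, w, hwf, hw⟩
  by_contra hne
  rcases hw with hwx | hwy
  · exact key_tilde G x y M hM hind hfM hepM hne hwf hqe hwx hqy
  · exact key_tilde G x y M hM hind hepM hfM (fun h => hne h.symm) hpe hwf hpx hwy
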